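/- Let Y be a real random variable with median 0 and symmetric positive density, and for y > 0 set λ(y) = −(2y)^{-1} log[2P(Y > y)], assumed positive and monotonically decreasing. Then for θ > 0, with ℓ(y,θ,0) = |y| − |y−θ|, it holds E exp{λ(θ)ℓ(Y,θ,0)} ≤ (1 + θλ(θ)) e^{−θλ(θ)}, and hence the rate function 𝔪(θ,0) = −log E exp{λ(θ)ℓ(Y,θ,0)} satisfies 𝔪(θ,0) ≥ θλ(θ) − log(1 + θλ(θ)). -/

import Mathlib

open MeasureTheory Real

-- Auxiliary: the key pointwise implication about the contrast function.
lemma stmt17_ell_gt {θ c y : ℝ} (hθ : 0 < θ) (hc1 : -θ < c) (hc2 : c ≤ θ)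
    (h : c < |y| - |y - θ|) : (c + θ) / 2 < y := by
  rcases abs_cases y with ⟨hy, hy'⟩ | ⟨hy, hy'⟩ <;>
    rcases abs_cases (y - θ) with ⟨hz, hz'⟩ | ⟨hz, hz'⟩ <;>
    rw [hy, hz] at h <;> linarith

/-- Median estimation (LAD contrast). Let `Y` have median `0`,
symmetric distribution, with `P(Y > y) = e^{-2yλ(y)}/2` for `y ≥ 0`, where
`λ` is positive and nonincreasing on `(0,∞)`. Then for `θ > 0`, with
`ℓ(y,θ,0) = |y| - |y-θ|`, one has
`E exp{λ(θ) ℓ(Y,θ,0)} ≤ (1 + θλ(θ)) e^{-θλ(θ)}`, hence the rate function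
`𝔪(θ,0) = -log E exp{λ(θ) ℓ(Y,θ,0)}` satisfies
`𝔪(θ,0) ≥ θλ(θ) - log(1 + θλ(θ))`. -/
theorem stmt17 {Ω : Type*} [MeasurableSpace Ω] (μ : Measure Ω) [IsProbabilityMeasure μ]
    (Y : Ω → ℝ) (hY : Measurable Y)
    (lam : ℝ → ℝ) (hlampos : ∀ y : ℝ, 0 < y → 0 < lam y)
    (hlammono : AntitoneOn lam (Set.Ioi (0 : ℝ)))
    (htail : ∀ y : ℝ, 0 ≤ y →
      (μ {ω | y < Y ω}).toReal = Real.exp (-(2 * y * lam y)) / 2)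
    (hsym : ∀ y : ℝ, 0 ≤ y → μ {ω | Y ω < -y} = μ {ω | y < Y ω}) :
    ∀ θ : ℝ, 0 < θ →
      (∫ ω, Real.exp (lam θ * (|Y ω| - |Y ω - θ|)) ∂μ
          ≤ (1 + θ * lam θ) * Real.exp (-(θ * lam θ))) ∧
      (θ * lam θ - Real.log (1 + θ * lam θ)
          ≤ -Real.log (∫ ω, Real.exp (lam θ * (|Y ω| - |Y ω - θ|)) ∂μ)) := by
  intro θ hθ
  set m := lam θ with hm
  have hmpos : 0 < m := hlampos θ hθ
  set a : ℝ := Real.exp (-(m * θ)) with ha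
  have hapos : 0 < a := Real.exp_pos _
  set T : ℝ := Real.exp (m * θ) - a with hT
  have hTpos : 0 < T := by
    have : a < Real.exp (m * θ) := by
      rw [ha]
      exact Real.exp_lt_exp.mpr (by nlinarith)
    linarith
  -- the exponent bounds
  have hell_lb : ∀ y : ℝ, -θ ≤ |y| - |y - θ| := by
    intro y
    have := abs_sub_abs_le_abs_sub y (y - θ)
    have h2 := abs_sub_abs_le_abs_sub (y - θ) y
    simp only [sub_sub_cancel, sub_sub_cancel_left, abs_neg] at this h2
    rw [abs_of_pos hθ] at h2
    linarith
  have hell_ub : ∀ y : ℝ, |y| - |y - θ| ≤ θ := by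
    intro y
    have := abs_sub_abs_le_abs_sub y (y - θ)
    simp only [sub_sub_cancel] at this
    rw [abs_of_pos hθ] at this
    linarith
  -- pointwise bounds on the integrand
  have hlb : ∀ ω, a ≤ Real.exp (m * (|Y ω| - |Y ω - θ|)) := by
    intro ω
    rw [ha]
    apply Real.exp_le_exp.mpr
    have := hell_lb (Y ω)
    nlinarith
  have hub : ∀ ω, Real.exp (m * (|Y ω| - |Y ω - θ|)) ≤ Real.exp (m * θ) := by
    intro ω
    apply Real.exp_le_exp.mpr
    have := hell_ub (Y ω)
    nlinarith
  -- measurability and integrability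
  have hmeas : Measurable fun ω => Real.exp (m * (|Y ω| - |Y ω - θ|)) := by
    fun_prop
  have hint : Integrable (fun ω => Real.exp (m * (|Y ω| - |Y ω - θ|))) μ := by
    refine (integrable_const (Real.exp (m * θ))).mono' hmeas.aestronglyMeasurable ?_
    filter_upwards with ω
    rw [Real.norm_eq_abs, abs_of_pos (Real.exp_pos _)]
    exact hub ω
  -- the shifted function f
  set f : Ω → ℝ := fun ω => Real.exp (m * (|Y ω| - |Y ω - θ|)) - a with hf
  have hfint : Integrable f μ := hint.sub (integrable_const a)
  have hfnn : 0 ≤ᵐ[μ] f := by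
    filter_upwards with ω
    have := hlb ω
    simp only [hf, Pi.zero_apply]
    linarith
  have hfub : ∀ ω, f ω ≤ T := fun ω => by
    have := hub ω
    simp only [hf, hT]
    linarith
  -- layer cake
  have hlayer := hfint.integral_eq_integral_meas_lt hfnn
  -- the dominating function
  set g : ℝ → ℝ := fun t => a / (2 * (t + a)) with hg
  set G : ℝ → ℝ := (Set.Ioc 0 T).indicator g with hG
  have hGint : IntegrableOn G (Set.Ioi 0) := by
    rw [hG, IntegrableOn, integrable_indicator_iff measurableSet_Ioc]
    have : IntegrableOn g (Set.Icc 0 T) := by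
      apply ContinuousOn.integrableOn_compact isCompact_Icc
      apply ContinuousOn.div continuousOn_const
      · fun_prop
      · intro t ht
        have := ht.1
        positivity
    rw [IntegrableOn, Measure.restrict_restrict measurableSet_Ioc,
      Set.inter_eq_self_of_subset_left (fun t ht => ht.1)]
    exact this.mono_set Set.Ioc_subset_Icc_self
  -- pointwise bound: tail measure of f is dominated by G on (0, ∞)
  have hbound : ∀ t ∈ Set.Ioi (0:ℝ), (μ {ω | t < f ω}).toReal ≤ G t := by
    intro t ht
    simp only [Set.mem_Ioi] at ht
    by_cases htT : t ≤ T
    · have hGt : G t = g t := Set.indicator_of_mem (Set.mem_Ioc.mpr ⟨ht, htT⟩) g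
      set c : ℝ := Real.log (t + a) / m with hc
      have hta : a < t + a := by linarith
      have hc1 : -θ < c := by
        rw [hc, lt_div_iff₀ hmpos]
        have : Real.log a < Real.log (t + a) := Real.log_lt_log hapos hta
        rw [ha, Real.log_exp] at this
        linarith
      have hc2 : c ≤ θ := by
        rw [hc, div_le_iff₀ hmpos]
        have h1 : t + a ≤ Real.exp (m * θ) := by rw [hT] at htT; linarith
        have := Real.log_le_log (by linarith) h1
        rw [Real.log_exp] at this
        linarith [this]
      set y₀ : ℝ := (c + θ) / 2 with hy₀
      have hy₀pos : 0 < y₀ := by rw [hy₀]; linarith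
      have hy₀le : y₀ ≤ θ := by rw [hy₀]; linarith
      have hsub : {ω | t < f ω} ⊆ {ω | y₀ < Y ω} := by
        intro ω hω
        simp only [Set.mem_setOf_eq, hf] at hω ⊢
        have h1 : t + a < Real.exp (m * (|Y ω| - |Y ω - θ|)) := by linarith
        have h2 : Real.log (t + a) < m * (|Y ω| - |Y ω - θ|) := by
          have := Real.log_lt_log (by linarith : (0:ℝ) < t + a) h1
          rwa [Real.log_exp] at this
        have h3 : c < |Y ω| - |Y ω - θ| := by
          rw [hc, div_lt_iff₀ hmpos]; linarith [h2, mul_comm m (|Y ω| - |Y ω - θ|)]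
        exact stmt17_ell_gt hθ hc1 hc2 h3
      have hmono : (μ {ω | t < f ω}).toReal ≤ (μ {ω | y₀ < Y ω}).toReal :=
        ENNReal.toReal_mono (measure_ne_top μ _) (measure_mono hsub)
      rw [htail y₀ hy₀pos.le] at hmono
      have hlam : m ≤ lam y₀ := hlammono (Set.mem_Ioi.mpr hy₀pos) (Set.mem_Ioi.mpr hθ) hy₀le
      have hexp : Real.exp (-(2 * y₀ * lam y₀)) ≤ Real.exp (-(2 * y₀ * m)) :=
        Real.exp_le_exp.mpr (by nlinarith)
      have hval : Real.exp (-(2 * y₀ * m)) = a / (t + a) := by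
        have h1 : 2 * y₀ * m = Real.log (t + a) + m * θ := by
          rw [hy₀, hc]; field_simp
        rw [h1, ha, neg_add, Real.exp_add, Real.exp_neg, Real.exp_log (by linarith)]
        ring
      rw [hGt, hg]
      calc (μ {ω | t < f ω}).toReal ≤ Real.exp (-(2 * y₀ * lam y₀)) / 2 := hmono
        _ ≤ Real.exp (-(2 * y₀ * m)) / 2 := by linarith
        _ = a / (2 * (t + a)) := by rw [hval, div_div, mul_comm]
    · push_neg at htT
      have hempty : {ω | t < f ω} = ∅ := by
        ext ω; simp only [Set.mem_setOf_eq, Set.mem_empty_iff_false, iff_false, not_lt]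
        exact (hfub ω).trans htT.le
      have hGt : G t = 0 := Set.indicator_of_notMem (fun h => absurd h.2 htT.not_ge) g
      rw [hempty, hGt, measure_empty]
      simp
  -- compare the layer-cake integral with ∫ G
  have hcomp : ∫ t in Set.Ioi (0:ℝ), (μ {ω | t < f ω}).toReal ≤ ∫ t in Set.Ioi (0:ℝ), G t := by
    apply integral_mono_of_nonneg
    · filter_upwards with t using ENNReal.toReal_nonneg
    · exact hGint
    · filter_upwards [ae_restrict_mem measurableSet_Ioi] with t ht using hbound t ht
  -- compute ∫ G
  have hGval : ∫ t in Set.Ioi (0:ℝ), G t = θ * m * a := by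
    rw [hG, setIntegral_indicator measurableSet_Ioc,
      Set.inter_eq_self_of_subset_right (fun t ht => ht.1),
      ← intervalIntegral.integral_of_le hTpos.le]
    have hgeq : ∀ t : ℝ, g t = (a / 2) * (t + a)⁻¹ := by
      intro t; simp only [hg, div_eq_mul_inv, mul_inv]; ring
    simp_rw [hgeq]
    rw [intervalIntegral.integral_const_mul,
      intervalIntegral.integral_comp_add_right (fun x => x⁻¹) a, zero_add,
      integral_inv (by
        intro h
        rcases Set.mem_uIcc.mp h with h | h
        · linarith [h.1]
        · linarith [h.1, h.2])]
    have hTa : T + a = Real.exp (m * θ) := by rw [hT]; ring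
    rw [hTa, ha, ← Real.exp_sub]
    rw [Real.log_exp]
    ring
  -- conclude the first bound
  have hEeq : ∫ ω, Real.exp (m * (|Y ω| - |Y ω - θ|)) ∂μ = (∫ ω, f ω ∂μ) + a := by
    rw [hf]
    rw [integral_sub hint (integrable_const a), integral_const]
    simp
  have hmain : ∫ ω, Real.exp (m * (|Y ω| - |Y ω - θ|)) ∂μ ≤ (1 + θ * m) * a := by
    rw [hEeq]
    have : ∫ ω, f ω ∂μ ≤ θ * m * a := by
      rw [hlayer]; exact hcomp.trans_eq hGval
    linarith
  have ha' : a = Real.exp (-(θ * m)) := by rw [ha, mul_comm]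
  constructor
  · rw [← ha']; exact hmain
  · have hEpos : 0 < ∫ ω, Real.exp (m * (|Y ω| - |Y ω - θ|)) ∂μ := by
      have : (a : ℝ) = ∫ _ω : Ω, a ∂μ := by simp
      calc (0:ℝ) < a := hapos
        _ = ∫ _ω, a ∂μ := this
        _ ≤ ∫ ω, Real.exp (m * (|Y ω| - |Y ω - θ|)) ∂μ :=
          integral_mono (integrable_const a) hint hlb
    have hlog := Real.log_le_log hEpos hmain
    rw [ha', Real.log_mul (by positivity) (Real.exp_ne_zero _), Real.log_exp] at hlog
    linarith
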